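/- Let b ≥ 2 be an integer and z ∈ ℂ. The singleton {z} is exponentially b-nonresonant if and only if Re z ≠ 0. -/

import Mathlib

open MeasureTheory Filter Set
open scoped Classical

/-- Base-`b` significand: `S_b(x) ∈ [1,b)` with `|x| = S_b(x)·b^k`; `S_b(0)=0`. -/
noncomputable def significand (b : ℕ) (x : ℝ) : ℝ :=
  if x = 0 then 0 else |x| / (b : ℝ) ^ (Int.log b |x|)

/-- `f` is `b`-Benford. -/
noncomputable def IsBenford (b : ℕ) (f : ℝ → ℝ) : Prop :=
  ∀ s : ℝ, 1 ≤ s → s < (b : ℝ) →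
    Tendsto (fun T : ℝ =>
        (volume {t : ℝ | 0 ≤ t ∧ t ≤ T ∧ significand b (f t) ≤ s}).toReal / T)
      atTop (nhds (Real.logb b s))

/-- A subset of the circle `ℝ/ℤ` is an arc if it is the image of an interval. -/
def IsArc (J : Set UnitAddCircle) : Prop :=
  ∃ a c : ℝ, J = (fun x : ℝ => (x : UnitAddCircle)) '' Set.Ico a c

/-- `f` is continuously uniformly distributed mod 1. -/
noncomputable def CUDMod1 (f : ℝ → ℝ) : Prop :=
  ∀ J : Set UnitAddCircle, IsArc J →
    Tendsto (fun T : ℝ =>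
        (volume {t : ℝ | 0 ≤ t ∧ t ≤ T ∧ ((f t : UnitAddCircle) ∈ J)}).toReal / T)
      atTop (nhds ((volume J).toReal))

/-- A sequence (indexed from 1) is uniformly distributed mod 1. -/
noncomputable def UDMod1 (x : ℕ → ℝ) : Prop :=
  ∀ J : Set UnitAddCircle, IsArc J →
    Tendsto (fun N : ℕ =>
        ((Finset.Icc 1 N).filter (fun n => ((x n : UnitAddCircle) ∈ J))).card / (N : ℝ))
      atTop (nhds ((volume J).toReal))

/-- The set `Δ_W` associated with `W ⊆ ℂ`. -/
noncomputable def deltaSet (W : Set ℂ) : Set ℝ :=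
  {x | ∃ z ∈ W, ∃ w ∈ W, x = 1 + (Complex.arg z - Complex.arg w) / (2 * Real.pi)}

/-- `W ⊆ ℂ` is `b`-nonresonant. -/
noncomputable def BNonresonant (b : ℕ) (W : Set ℂ) : Prop :=
  ∀ r : ℝ, 0 < r → (W ∩ {z | ‖z‖ = r}).Nonempty →
    (deltaSet (W ∩ {z | ‖z‖ = r}) ∩ Set.range ((↑) : ℚ → ℝ) = {1}) ∧
    Real.logb b r ∉ Submodule.span ℚ (deltaSet (W ∩ {z | ‖z‖ = r}))

/-- `Z ⊆ ℂ` is exponentially `b`-nonresonant. -/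
noncomputable def ExpBNonresonant (b : ℕ) (Z : Set ℂ) : Prop :=
  ∃ t : ℝ, 0 ≤ t ∧ BNonresonant b ((fun z => Complex.exp (t * z)) '' Z)

/-- The spectrum (set of complex eigenvalues) of a real square matrix. -/
noncomputable def realSpectrum {d : ℕ} (A : Matrix (Fin d) (Fin d) ℝ) : Set ℂ :=
  spectrum ℂ (A.map (algebraMap ℝ ℂ))


lemma deltaSet_singleton (w : ℂ) : deltaSet {w} = {1} := by
  ext x
  simp [deltaSet]

/-- `{z}` is exponentially `b`-nonresonant iff `Re z ≠ 0`. -/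
theorem expNonresonant_singleton_iff (b : ℕ) (hb : 2 ≤ b) (z : ℂ) :
    ExpBNonresonant b {z} ↔ z.re ≠ 0 := by
  have hb1 : (1:ℝ) < b := by exact_mod_cast lt_of_lt_of_le one_lt_two hb
  have hlogb : 0 < Real.log b := Real.log_pos hb1
  constructor
  · rintro ⟨t, ht, hB⟩ hre
    have habs : ‖Complex.exp (t * z)‖ = 1 := by
      rw [Complex.norm_exp]
      simp [Complex.mul_re, hre]
    have hmem : Complex.exp (t * z) ∈
        ((fun w => Complex.exp (t * w)) '' {z}) ∩ {w | ‖w‖ = 1} :=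
      ⟨⟨z, rfl, rfl⟩, habs⟩
    have := (hB 1 one_pos ⟨_, hmem⟩).2
    exact this (by simp only [Real.logb_one]; exact (Submodule.zero_mem
      (Submodule.span ℚ (deltaSet (((fun w => Complex.exp (t * w)) '' {z}) ∩ {w | ‖w‖ = 1})))))
  · intro hre
    refine ⟨Real.log b * Real.sqrt 2 / |z.re|, ?_, ?_⟩
    · exact div_nonneg (mul_nonneg hlogb.le (Real.sqrt_nonneg _)) (abs_nonneg _)
    · set t : ℝ := Real.log b * Real.sqrt 2 / |z.re| with hT
      intro r hr ⟨w, hw1, hw2⟩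
      obtain ⟨z', hz', hwz⟩ := hw1
      rw [Set.mem_singleton_iff] at hz'
      rw [hz'] at hwz
      rw [← hwz] at hw2
      have hre' : (0:ℝ) < |z.re| := abs_pos.mpr hre
      have hrval : r = Real.exp (t * z.re) := by
        rw [← hw2]
        simp only [Set.mem_setOf_eq] at hw2 ⊢
        rw [Complex.norm_exp]
        simp [Complex.mul_re]
      have hWset : ((fun w => Complex.exp (t * w)) '' {z}) ∩ {w | ‖w‖ = r}
          = {Complex.exp (t * z)} := by
        apply Set.eq_singleton_iff_unique_mem.mpr
        constructor
        · exact ⟨⟨z, rfl, rfl⟩, hw2⟩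
        · rintro x ⟨⟨y, hy, hxy⟩, -⟩
          rw [Set.mem_singleton_iff] at hy
          rw [← hxy, hy]
      rw [hWset, deltaSet_singleton]
      constructor
      · rw [Set.inter_eq_left]
        rintro x rfl
        exact ⟨1, by norm_num⟩
      · intro hmem
        rw [Submodule.mem_span_singleton] at hmem
        obtain ⟨q, hq⟩ := hmem
        have hq' : (q : ℝ) = Real.logb b r := by simpa using hq
        have hval : Real.logb b r = Real.sqrt 2 * z.re / |z.re| := by
          rw [hrval, Real.logb, Real.log_exp, hT]
          field_simp
        have habsval : |Real.logb b r| = Real.sqrt 2 := by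
          rw [hval, abs_div, abs_mul, abs_abs, abs_of_nonneg (Real.sqrt_nonneg _),
            mul_div_assoc, div_self (ne_of_gt hre'), mul_one]
        have : Real.sqrt 2 = ((|q| : ℚ) : ℝ) := by
          rw [← habsval, ← hq']
          push_cast
          rfl
        exact irrational_sqrt_two ⟨|q|, this.symm⟩
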